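/- Let A be the set of all sequences a ∈ ℓ¹ such that there exist m ≠ n with a(m) = 1/2, a(n) = -1/2, and a(i) = 0 for all other i. Then 0 belongs to the closure of A in the weak topology of ℓ¹. -/

import Mathlib

open Filter Topology Set

noncomputable section

/-- The Banach space `ℓ¹` of absolutely summable real sequences. -/
abbrev ellOne : Type := lp (fun _ : ℕ => ℝ) 1

/-- The set of sequences in `ℓ¹` with exactly two nonzero entries, equal to `1/2` and `-1/2`. -/
def pairSet : Set ellOne :=
  {a : ellOne | ∃ m n : ℕ, m ≠ n ∧ a m = 1/2 ∧ a n = -1/2 ∧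
    ∀ i : ℕ, i ≠ m → i ≠ n → a i = 0}

/-- Pigeonhole: a bounded sequence in a finite product of reals has two close terms. -/
lemma exists_close_pair {ι : Type} [Fintype ι] (φ : ℕ → ι → ℝ) (C : ι → ℝ)
    (hC : ∀ n i, |φ n i| ≤ C i) {ε : ℝ} (hε : 0 < ε) :
    ∃ m n : ℕ, m ≠ n ∧ ∀ i, |φ m i - φ n i| < ε := by
  have hK : IsCompact (Set.pi Set.univ fun i => Metric.closedBall (0:ℝ) (C i)) :=
    isCompact_univ_pi fun i => isCompact_closedBall _ _
  have htb := hK.totallyBounded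
  rw [Metric.totallyBounded_iff] at htb
  obtain ⟨s, hs, hcov⟩ := htb (ε/2) (by linarith)
  have hmem : ∀ n, φ n ∈ Set.pi Set.univ fun i => Metric.closedBall (0:ℝ) (C i) := by
    intro n
    rw [Set.mem_univ_pi]
    intro i
    simpa [Real.dist_eq] using hC n i
  choose c hc1 hc2 using fun n => Set.mem_iUnion₂.mp (hcov (hmem n))
  haveI : Finite s := hs.to_subtype
  obtain ⟨m, n, hmn, hcmn⟩ := Finite.exists_ne_map_eq_of_infinite
    (fun n => (⟨c n, hc1 n⟩ : s))
  have hcm : c m = c n := congrArg Subtype.val hcmn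
  have h1 : dist (φ m) (c m) < ε/2 := by simpa [Metric.mem_ball] using hc2 m
  have h2 : dist (φ n) (c n) < ε/2 := by simpa [Metric.mem_ball] using hc2 n
  have hd : dist (φ m) (φ n) < ε := by
    calc dist (φ m) (φ n) ≤ dist (φ m) (c m) + dist (c m) (φ n) := dist_triangle _ _ _
      _ = dist (φ m) (c m) + dist (φ n) (c n) := by rw [hcm, dist_comm (c n) (φ n)]
      _ < ε := by linarith
  refine ⟨m, n, hmn, fun i => ?_⟩
  calc |φ m i - φ n i| = dist (φ m i) (φ n i) := (Real.dist_eq _ _).symm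
    _ ≤ dist (φ m) (φ n) := dist_le_pi_dist _ _ _
    _ < ε := hd

/-- The `ℓ¹` norm of a basis vector is `1`. -/
lemma norm_single_one (k : ℕ) : ‖lp.single (E := fun _ : ℕ => ℝ) 1 k (1:ℝ)‖ = 1 := by
  have h := lp.norm_single (E := fun _ : ℕ => ℝ) (p := 1) (by norm_num) k (1:ℝ)
  simpa using h

/-- `0` lies in the weak closure of the set `A` of two-point `±1/2` sequences in `ℓ¹`. -/
theorem zero_mem_weak_closure_pairSet :
    (0 : WeakSpace ℝ ellOne) ∈
      closure ((toWeakSpace ℝ ellOne) '' pairSet) := by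
  rw [mem_closure_iff_nhds]
  intro U hU
  obtain ⟨V, hV, hVU⟩ :=
    (mem_nhds_induced (fun (x : WeakSpace ℝ ellOne)
      (L : StrongDual ℝ ellOne) => (topDualPairing ℝ ellOne).flip x L) 0 U).mp hU
  rw [nhds_pi, Filter.mem_pi] at hV
  obtain ⟨I, hIfin, t, ht, hpi⟩ := hV
  have ht0 : ∀ L, t L ∈ 𝓝 (0 : ℝ) := by
    intro L
    have h0 : (topDualPairing ℝ ellOne).flip (0 : WeakSpace ℝ ellOne) L = 0 := by
      exact map_zero L
    simpa [h0] using ht L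
  -- Intersection of the neighborhoods over the finite set `I` contains a small ball.
  have hball : (⋂ L ∈ I, t L) ∈ 𝓝 (0 : ℝ) :=
    (Filter.biInter_mem hIfin).mpr fun L _ => ht0 L
  obtain ⟨δ, hδ, hδsub⟩ := Metric.mem_nhds_iff.mp hball
  haveI := hIfin.fintype
  -- pigeonhole on the evaluations at basis vectors
  set φ : ℕ → I → ℝ := fun k L => (L : StrongDual ℝ ellOne) (lp.single 1 k (1:ℝ)) with hφ
  have hCb : ∀ k (L : I), |φ k L| ≤ ‖(L : StrongDual ℝ ellOne)‖ := by
    intro k L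
    have h := (L : StrongDual ℝ ellOne).le_opNorm (lp.single 1 k (1:ℝ))
    rwa [norm_single_one, mul_one, Real.norm_eq_abs] at h
  obtain ⟨m, n, hmn, hclose⟩ := exists_close_pair φ
    (fun L => ‖(L : StrongDual ℝ ellOne)‖) hCb hδ
  -- the element of pairSet
  set a : ellOne := (2:ℝ)⁻¹ • (lp.single 1 m (1:ℝ) - lp.single 1 n (1:ℝ)) with ha
  have happly : ∀ i : ℕ, a i
      = (2:ℝ)⁻¹ * (lp.single (E := fun _ : ℕ => ℝ) 1 m (1:ℝ) i
        - lp.single (E := fun _ : ℕ => ℝ) 1 n (1:ℝ) i) := by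
    intro i
    rw [ha]
    simp
    rfl
  have haA : a ∈ pairSet := by
    refine ⟨m, n, hmn, ?_, ?_, ?_⟩
    · rw [happly m, lp.single_apply_self, lp.single_apply_ne 1 n _ hmn]
      norm_num
    · rw [happly n, lp.single_apply_self, lp.single_apply_ne 1 m _ (Ne.symm hmn)]
      norm_num
    · intro i him hin
      rw [happly i, lp.single_apply_ne 1 m _ him, lp.single_apply_ne 1 n _ hin]
      ring
  refine ⟨toWeakSpace ℝ ellOne a, hVU (hpi ?_), Set.mem_image_of_mem _ haA⟩
  intro L hL
  show (topDualPairing ℝ ellOne).flip (toWeakSpace ℝ ellOne a) L ∈ t L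
  have hLa : (topDualPairing ℝ ellOne).flip (toWeakSpace ℝ ellOne a) L = L a := rfl
  rw [hLa]
  have hval : L a = (2:ℝ)⁻¹ * (φ m ⟨L, hL⟩ - φ n ⟨L, hL⟩) := by
    rw [ha, hφ]
    simp [mul_sub]
  have habs : |L a| < δ := by
    rw [hval, abs_mul]
    have h3 := hclose ⟨L, hL⟩
    have h4 : |(2:ℝ)⁻¹| = (2:ℝ)⁻¹ := by norm_num
    rw [h4]
    nlinarith [abs_nonneg (φ m ⟨L, hL⟩ - φ n ⟨L, hL⟩)]
  have hmemball : L a ∈ Metric.ball (0:ℝ) δ := by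
    simpa [Real.dist_eq] using habs
  have hmemi := hδsub hmemball
  simpa using Set.mem_iInter₂.mp hmemi L hL
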